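/- The big q-Jacobi polynomials satisfy the symmetry P_n(x; a, b, c; q) = P_n(x; c, a b c^{-1}, a; q). -/
import Mathlib


/-- q-shifted factorial `(b;q)_k`. -/
noncomputable def qp (q b : ℂ) (k : ℕ) : ℂ := ∏ j ∈ Finset.range k, (1 - b * q ^ j)

/-- Big q-Jacobi polynomial `P_n(x;a,b,c;q)` as a terminating ₃φ₂ sum. -/
noncomputable def bigqJacobi (q a b c x : ℂ) (n : ℕ) : ℂ :=
  ∑ k ∈ Finset.range (n + 1),
    qp q (q ^ (-(n : ℤ))) k * qp q (q ^ ((n : ℤ) + 1) * (a * b)) k * qp q x k /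
      (qp q q k * qp q (q * a) k * qp q (q * c) k) * q ^ k

/-- Symmetry `P_n(x;a,b,c;q) = P_n(x;c,abc⁻¹,a;q)` of big q-Jacobi polynomials. -/
theorem stmt6 (q a b c x : ℂ) (n : ℕ)
    (hq : q ≠ 0) (hroot : ∀ m : ℕ, 1 ≤ m → q ^ m ≠ 1) (hc : c ≠ 0)
    (hA : ∀ m : ℕ, 1 ≤ m → a ≠ q ^ (-(m : ℤ)))
    (hC : ∀ m : ℕ, 1 ≤ m → c ≠ q ^ (-(m : ℤ)))
    (hAB : ∀ m : ℕ, 1 ≤ m → a * b ≠ q ^ (-(m : ℤ))) :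
    bigqJacobi q a b c x n = bigqJacobi q c (a * b * c⁻¹) a x n := by
  unfold bigqJacobi
  refine Finset.sum_congr rfl fun k _ => ?_
  have h1 : c * (a * b * c⁻¹) = a * b := by field_simp
  rw [h1]; ring
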